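/- Let f : R → R be Lipschitz continuous with constant λ > 0 and suppose f is ε'-approximable by continuous rational piecewise linear functions for every ε' > 0. Then for every ε with 0 < ε ≤ 1 there is a continuous piecewise linear function L with rational parameters that ε-approximates f (i.e., |f(x) − L(x)| ≤ ε|f(x)| + ε for all x) and is Lipschitz continuous with constant (1+ε)·λ. -/

import Mathlib

/-- A real number is dyadic if it is of the form `z / 2^k`. -/
def IsDyadic (x : ℝ) : Prop := ∃ (z : ℤ) (k : ℕ), x = (z : ℝ) / 2 ^ k

/-- `L` is a rational (dyadic) piecewise linear function: finitely many affine
pieces `aᵢ x + bᵢ` separated by thresholds `t₁ < … < tₙ`, all parameters dyadic. -/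
def IsRPL (L : ℝ → ℝ) : Prop :=
  ∃ (n : ℕ) (t : Fin n → ℝ) (a b : Fin (n + 1) → ℝ),
    StrictMono t ∧ (∀ i, IsDyadic (t i)) ∧
    (∀ i, IsDyadic (a i) ∧ IsDyadic (b i)) ∧
    ∀ (i : Fin (n + 1)) (x : ℝ),
      (∀ j : Fin n, (j : ℕ) < (i : ℕ) → t j ≤ x) →
      (∀ j : Fin n, (i : ℕ) ≤ (j : ℕ) → x < t j) →
      L x = a i * x + b i

lemma isDyadic_int (z : ℤ) : IsDyadic (z : ℝ) := ⟨z, 0, by simp⟩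

lemma isDyadic_nat (m : ℕ) : IsDyadic (m : ℝ) := ⟨m, 0, by simp⟩

lemma isDyadic_add {x y : ℝ} (hx : IsDyadic x) (hy : IsDyadic y) : IsDyadic (x + y) := by
  obtain ⟨z1, k1, rfl⟩ := hx
  obtain ⟨z2, k2, rfl⟩ := hy
  refine ⟨z1 * 2 ^ k2 + z2 * 2 ^ k1, k1 + k2, ?_⟩
  push_cast
  rw [pow_add]
  field_simp

lemma isDyadic_neg {x : ℝ} (hx : IsDyadic x) : IsDyadic (-x) := by
  obtain ⟨z, k, rfl⟩ := hx
  exact ⟨-z, k, by push_cast; ring⟩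

lemma isDyadic_sub {x y : ℝ} (hx : IsDyadic x) (hy : IsDyadic y) : IsDyadic (x - y) := by
  rw [sub_eq_add_neg]; exact isDyadic_add hx (isDyadic_neg hy)

lemma isDyadic_mul {x y : ℝ} (hx : IsDyadic x) (hy : IsDyadic y) : IsDyadic (x * y) := by
  obtain ⟨z1, k1, rfl⟩ := hx
  obtain ⟨z2, k2, rfl⟩ := hy
  refine ⟨z1 * z2, k1 + k2, ?_⟩
  push_cast
  rw [pow_add]
  field_simp

lemma isDyadic_two_pow (k : ℕ) : IsDyadic ((2:ℝ) ^ k) := ⟨2 ^ k, 0, by push_cast; simp⟩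

lemma exists_dyadic_near (x δ : ℝ) (hδ : 0 < δ) : ∃ d, IsDyadic d ∧ |d - x| ≤ δ := by
  obtain ⟨m, hm⟩ := exists_nat_gt (1 / δ)
  have h2m : (m : ℝ) < 2 ^ m := by exact_mod_cast (Nat.lt_two_pow_self (n := m))
  have hpow : 1 / δ < 2 ^ m := lt_trans hm h2m
  have hpowpos : (0:ℝ) < 2 ^ m := by positivity
  refine ⟨(⌊x * 2 ^ m⌋ : ℝ) / 2 ^ m, ⟨⌊x * 2 ^ m⌋, m, rfl⟩, ?_⟩
  have h1 : (⌊x * 2 ^ m⌋ : ℝ) ≤ x * 2 ^ m := Int.floor_le _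
  have h2 : x * 2 ^ m - 1 < (⌊x * 2 ^ m⌋ : ℝ) := Int.sub_one_lt_floor _
  rw [abs_le]
  constructor
  · rw [div_sub' (ne_of_gt hpowpos), le_div_iff₀ hpowpos]
    have : 1 < δ * 2 ^ m := by
      rw [div_lt_iff₀ hδ] at hpow; linarith [hpow]
    nlinarith
  · rw [div_sub' (ne_of_gt hpowpos), div_le_iff₀ hpowpos]
    nlinarith [hδ.le, hpowpos]

lemma slope_trick {c d e : ℝ} (he : 0 ≤ e) (h : ∀ s : ℝ, 0 < s → c * s ≤ d * s + e) :
    c ≤ d := by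
  by_contra hcd
  push_neg at hcd
  have hpos : 0 < c - d := by linarith
  have hs : 0 < (e + 1) / (c - d) := div_pos (by linarith) hpos
  have := h _ hs
  have heq : (c - d) * ((e + 1) / (c - d)) = e + 1 := by
    field_simp
  nlinarith [this, heq]

lemma lower_card {n : ℕ} (S : Finset (Fin n))
    (hS : ∀ j j' : Fin n, j ≤ j' → j' ∈ S → j ∈ S) (j : Fin n) :
    j ∈ S ↔ (j : ℕ) < S.card := by
  constructor
  · intro hj
    have hsub : Finset.Iic j ⊆ S := fun j' hj' => hS j' j (Finset.mem_Iic.mp hj') hj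
    have := Finset.card_le_card hsub
    rw [Fin.card_Iic] at this
    omega
  · intro h
    by_contra hj
    have hsub : S ⊆ Finset.Iio j := by
      intro j' hj'
      rw [Finset.mem_Iio]
      by_contra hle
      exact hj (hS j j' (not_lt.mp hle) hj')
    have := Finset.card_le_card hsub
    rw [Fin.card_Iio] at this
    omega

lemma rpl_construct (n : ℕ) (t : Fin n → ℝ) (a b : Fin (n+1) → ℝ) (K : ℝ)
    (ht : StrictMono t)
    (hdt : ∀ i, IsDyadic (t i)) (hdab : ∀ i, IsDyadic (a i) ∧ IsDyadic (b i))
    (hcont : ∀ j : Fin n, a j.castSucc * t j + b j.castSucc = a j.succ * t j + b j.succ)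
    (hK : ∀ i, |a i| ≤ K) :
    ∃ L : ℝ → ℝ, IsRPL L ∧ Continuous L ∧
      (∀ (i : Fin (n+1)) (x : ℝ), (∀ j : Fin n, (j : ℕ) < (i : ℕ) → t j ≤ x) →
        (∀ j : Fin n, (i : ℕ) ≤ (j : ℕ) → x < t j) → L x = a i * x + b i) ∧
      (∀ x y, |L x - L y| ≤ K * |x - y|) := by
  classical
  set idx : ℝ → ℕ := fun x => (Finset.univ.filter (fun j : Fin n => t j ≤ x)).card with hidx
  have hidxle : ∀ x, idx x ≤ n := by
    intro x
    calc (Finset.univ.filter (fun j : Fin n => t j ≤ x)).card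
        ≤ (Finset.univ : Finset (Fin n)).card := Finset.card_le_card (Finset.filter_subset _ _)
      _ = n := by simp
  set iF : ℝ → Fin (n+1) := fun x => ⟨idx x, Nat.lt_succ_of_le (hidxle x)⟩ with hiF
  set L : ℝ → ℝ := fun x => a (iF x) * x + b (iF x) with hL
  have mem_iff : ∀ (x : ℝ) (j : Fin n), t j ≤ x ↔ (j : ℕ) < idx x := by
    intro x j
    have := lower_card (Finset.univ.filter (fun j : Fin n => t j ≤ x))
      (by
        intro j j' hle hj'
        simp only [Finset.mem_filter, Finset.mem_univ, true_and] at *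
        exact le_trans (ht.monotone hle) hj') j
    simpa using this
  -- piece identification
  have piece : ∀ (i : Fin (n+1)) (x : ℝ), (∀ j : Fin n, (j : ℕ) < (i : ℕ) → t j ≤ x) →
      (∀ j : Fin n, (i : ℕ) ≤ (j : ℕ) → x < t j) → iF x = i := by
    intro i x h1 h2
    have hle : idx x ≤ (i : ℕ) := by
      by_contra h
      push_neg at h
      have hin : (i : ℕ) < n := lt_of_lt_of_le h (hidxle x)
      have := (mem_iff x ⟨(i : ℕ), hin⟩).mpr h
      exact absurd this (not_le.mpr (h2 ⟨(i : ℕ), hin⟩ (le_refl _)))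
    have hge : (i : ℕ) ≤ idx x := by
      by_contra h
      push_neg at h
      have hin : idx x < n := by
        have := i.isLt; omega
      have := (mem_iff x ⟨idx x, hin⟩).mp (h1 ⟨idx x, hin⟩ h)
      simp at this
    exact Fin.ext (le_antisymm hle hge)
  have hform : ∀ (i : Fin (n+1)) (x : ℝ), (∀ j : Fin n, (j : ℕ) < (i : ℕ) → t j ≤ x) →
      (∀ j : Fin n, (i : ℕ) ≤ (j : ℕ) → x < t j) → L x = a i * x + b i := by
    intro i x h1 h2
    rw [hL]
    simp only [piece i x h1 h2]
  have hK0 : 0 ≤ K := le_trans (abs_nonneg _) (hK 0)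
  have idx_mono : ∀ x y : ℝ, x ≤ y → idx x ≤ idx y := by
    intro x y hxy
    apply Finset.card_le_card
    intro j hj
    simp only [Finset.mem_filter, Finset.mem_univ, true_and] at *
    exact le_trans hj hxy
  -- Lipschitz on ordered pairs by strong induction on idx y - idx x
  have key : ∀ (d : ℕ) (x y : ℝ), x ≤ y → idx y - idx x = d → |L y - L x| ≤ K * (y - x) := by
    intro d
    induction d using Nat.strong_induction_on with
    | _ d ih =>
      intro x y hxy hd
      rcases Nat.eq_zero_or_pos d with h0 | hpos
      · subst h0
        have heq : idx x = idx y := le_antisymm (idx_mono x y hxy) (by omega)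
        have : iF x = iF y := Fin.ext heq
        rw [hL]
        simp only [this]
        have : a (iF y) * y + b (iF y) - (a (iF y) * x + b (iF y)) = a (iF y) * (y - x) := by ring
        rw [this, abs_mul, abs_of_nonneg (show (0:ℝ) ≤ y - x by linarith)]
        exact mul_le_mul_of_nonneg_right (hK _) (by linarith)
      · -- idx x < idx y
        have hlt : idx x < idx y := by omega
        have hxn : idx x < n := lt_of_lt_of_le hlt (hidxle y)
        set j₀ : Fin n := ⟨idx x, hxn⟩ with hj₀
        set m := t j₀ with hm
        have hxm : x < m := by
          by_contra h
          push_neg at h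
          have := (mem_iff x j₀).mp h
          simp [hj₀] at this
        have hmy : m ≤ y := (mem_iff y j₀).mpr (by simp [hj₀]; omega)
        have hidxm : idx m = idx x + 1 := by
          have h1 : idx x < idx m := by
            have := (mem_iff m j₀).mp (le_refl m)
            simpa [hj₀] using this
          have h2 : idx m ≤ idx x + 1 := by
            by_contra h
            push_neg at h
            have hin : idx x + 1 < n := lt_of_lt_of_le h (hidxle m)
            have := (mem_iff m ⟨idx x + 1, hin⟩).mpr (by simpa using h)
            have hlt2 : t j₀ < t ⟨idx x + 1, hin⟩ := ht (by simp [hj₀, Fin.lt_def])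
            linarith
          omega
        have step1 : |L y - L m| ≤ K * (y - m) := by
          apply ih (d - 1) (by omega) m y hmy
          omega
        have step2 : |L m - L x| ≤ K * (m - x) := by
          -- L m via continuity: a (iF m) m + b (iF m) = a (iF x) m + b (iF x)
          have hcs : j₀.castSucc = iF x := Fin.ext (by simp [hj₀, hiF])
          have hsc : j₀.succ = iF m := Fin.ext (by simp [hj₀, hiF, hidxm])
          have hLm : L m = a (iF x) * m + b (iF x) := by
            rw [hL]
            simp only []
            rw [← hsc, ← (hcont j₀), hcs]
          rw [hLm, hL]
          simp only []
          have : a (iF x) * m + b (iF x) - (a (iF x) * x + b (iF x)) = a (iF x) * (m - x) := by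
            ring
          rw [this, abs_mul, abs_of_nonneg (show (0:ℝ) ≤ m - x by linarith)]
          exact mul_le_mul_of_nonneg_right (hK _) (by linarith)
        calc |L y - L x| ≤ |L y - L m| + |L m - L x| := abs_sub_le _ _ _
          _ ≤ K * (y - m) + K * (m - x) := add_le_add step1 step2
          _ = K * (y - x) := by ring
  have hlip : ∀ x y, |L x - L y| ≤ K * |x - y| := by
    intro x y
    rcases le_total x y with h | h
    · have := key (idx y - idx x) x y h rfl
      rw [abs_sub_comm x y, abs_of_nonneg (show (0:ℝ) ≤ y - x by linarith),
        abs_sub_comm (L x)]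
      exact this
    · have := key (idx x - idx y) y x h rfl
      rw [abs_of_nonneg (show (0:ℝ) ≤ x - y by linarith)]
      exact this
  have hcontL : Continuous L := by
    have : LipschitzWith (Real.toNNReal K) L := by
      apply LipschitzWith.of_dist_le_mul
      intro x y
      rw [Real.dist_eq, Real.dist_eq, Real.coe_toNNReal K hK0]
      exact hlip x y
    exact this.continuous
  exact ⟨L, ⟨n, t, a, b, ht, hdt, hdab, hform⟩, hcontL, hform, hlip⟩

lemma tail_final {ε X Y δ E : ℝ} (hε : 0 < ε) (hε1 : ε ≤ 1) (hδ1 : δ ≤ ε/8)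
    (hX : 0 ≤ X) (hY0 : 0 ≤ Y)
    (hE : E ≤ (ε/8 * X + ε/8) + (ε/8 * Y + ε/8) + δ)
    (hY : (1 - ε/8) * Y ≤ (1 + ε/8) * X + 2 * (ε/8)) :
    E ≤ ε * X + ε := by
  have hY' : Y ≤ 2*X + 1 := by
    nlinarith [mul_nonneg (by linarith : (0:ℝ) ≤ 1-ε) hX,
      mul_nonneg (by linarith : (0:ℝ) ≤ 1-ε) hY0]
  have hp : ε * Y ≤ ε * (2*X+1) := mul_le_mul_of_nonneg_left hY' hε.le
  have hXp : 0 ≤ ε * X := mul_nonneg hε.le hX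
  linarith

set_option maxHeartbeats 4000000 in
theorem lipschitz_rpl_approximation (f : ℝ → ℝ) (lam : ℝ) (hlam : 0 < lam)
    (hf : ∀ x y, |f x - f y| ≤ lam * |x - y|)
    (happ : ∀ ε' : ℝ, 0 < ε' → ∃ L : ℝ → ℝ, IsRPL L ∧ Continuous L ∧
      ∀ x, |f x - L x| ≤ ε' * |f x| + ε') :
    ∀ ε : ℝ, 0 < ε → ε ≤ 1 → ∃ L : ℝ → ℝ, IsRPL L ∧ Continuous L ∧
      (∀ x, |f x - L x| ≤ ε * |f x| + ε) ∧
      (∀ x y, |L x - L y| ≤ (1 + ε) * lam * |x - y|) := by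
  intro ε hε hε1
  have hε'pos : 0 < ε / 8 := by positivity
  obtain ⟨L₁, hRPL₁, _, h₁⟩ := happ (ε / 8) hε'pos
  obtain ⟨n₁, t₁, a₁, b₁, ht₁, hdt₁, hdab₁, hpiece₁⟩ := hRPL₁
  set aR := a₁ (Fin.last n₁) with haR
  set bR := b₁ (Fin.last n₁) with hbR
  set aL := a₁ 0 with haL
  set bL := b₁ 0 with hbL
  set T : ℝ := ((Finset.univ.sup fun j : Fin n₁ => (⌈t₁ j⌉).toNat : ℕ) : ℝ) with hT
  set TL : ℝ := -(((Finset.univ.sup fun j : Fin n₁ => (⌈-t₁ j⌉).toNat : ℕ) : ℝ)) with hTL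
  have hTt : ∀ j, t₁ j ≤ T := by
    intro j
    have h1 : t₁ j ≤ (⌈t₁ j⌉ : ℝ) := Int.le_ceil _
    have h2 : (⌈t₁ j⌉ : ℝ) ≤ (((⌈t₁ j⌉).toNat : ℕ) : ℝ) := by exact_mod_cast Int.self_le_toNat _
    have h3 : (((⌈t₁ j⌉).toNat : ℕ) : ℝ) ≤ T := by
      rw [hT]
      exact_mod_cast Finset.le_sup (f := fun j : Fin n₁ => (⌈t₁ j⌉).toNat) (Finset.mem_univ j)
    linarith
  have hTLt : ∀ j, TL ≤ t₁ j := by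
    intro j
    have h1 : -t₁ j ≤ (⌈-t₁ j⌉ : ℝ) := Int.le_ceil _
    have h2 : (⌈-t₁ j⌉ : ℝ) ≤ (((⌈-t₁ j⌉).toNat : ℕ) : ℝ) := by exact_mod_cast Int.self_le_toNat _
    have h3 : (((⌈-t₁ j⌉).toNat : ℕ) : ℝ) ≤ -TL := by
      rw [hTL, neg_neg]
      exact_mod_cast Finset.le_sup (f := fun j : Fin n₁ => (⌈-t₁ j⌉).toNat) (Finset.mem_univ j)
    linarith
  have hT0 : 0 ≤ T := by rw [hT]; positivity
  have hTL0 : TL ≤ 0 := by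
    rw [hTL]
    simp only [neg_nonpos]
    positivity
  have hRform : ∀ x, T ≤ x → L₁ x = aR * x + bR := by
    intro x hx
    apply hpiece₁ (Fin.last n₁)
    · intro j _
      exact le_trans (hTt j) hx
    · intro j hj
      exact absurd (lt_of_lt_of_le j.isLt (by simpa [Fin.val_last] using hj)) (lt_irrefl _)
  have hLform : ∀ x, x < TL → L₁ x = aL * x + bL := by
    intro x hx
    apply hpiece₁ 0
    · intro j hj
      simp at hj
    · intro j _
      exact lt_of_lt_of_le hx (hTLt j)
  -- triangle helper
  have htri : ∀ x y : ℝ, |L₁ x - L₁ y| ≤ lam * |x - y| + (ε/8 * |f x| + ε/8) + (ε/8 * |f y| + ε/8) := by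
    intro x y
    have e1 := h₁ x
    have e2 := h₁ y
    have e3 := hf x y
    have t1 : L₁ x - L₁ y = (f x - f y) - (f x - L₁ x) + (f y - L₁ y) := by ring
    calc |L₁ x - L₁ y| = |(f x - f y) - (f x - L₁ x) + (f y - L₁ y)| := by rw [t1]
      _ ≤ |(f x - f y) - (f x - L₁ x)| + |f y - L₁ y| := abs_add_le _ _
      _ ≤ |f x - f y| + |f x - L₁ x| + |f y - L₁ y| := by
          have := abs_sub (f x - f y) (f x - L₁ x)
          linarith only [this]
      _ ≤ lam * |x - y| + (ε/8 * |f x| + ε/8) + (ε/8 * |f y| + ε/8) := by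
          linarith only [e1, e2, e3]
  -- slope bound on right tail
  have habsR : |aR| ≤ (1 + ε/8) * lam := by
    apply slope_trick (e := ε/8 * (2 * |f (T+1)| + 2)) (by positivity)
    intro s hs
    have hA : |aR| * s = |L₁ (T+1+s) - L₁ (T+1)| := by
      rw [hRform (T+1+s) (by linarith), hRform (T+1) (by linarith)]
      have : aR * (T+1+s) + bR - (aR * (T+1) + bR) = aR * s := by ring
      rw [this, abs_mul, abs_of_pos hs]
    have h2 := htri (T+1+s) (T+1)
    have h3 : |T+1+s - (T+1)| = s := by
      rw [show T+1+s - (T+1) = s by ring, abs_of_pos hs]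
    have h4 : |f (T+1+s)| ≤ |f (T+1)| + lam * s := by
      have := abs_sub_abs_le_abs_sub (f (T+1+s)) (f (T+1))
      have h5 := hf (T+1+s) (T+1)
      rw [h3] at h5
      linarith
    rw [h3] at h2
    rw [hA]
    have hmul := mul_le_mul_of_nonneg_left h4 hε'pos.le
    linarith only [h2, hmul]
  have habsL : |aL| ≤ (1 + ε/8) * lam := by
    apply slope_trick (e := ε/8 * (2 * |f (TL-1)| + 2)) (by positivity)
    intro s hs
    have hA : |aL| * s = |L₁ (TL-1) - L₁ (TL-1-s)| := by
      rw [hLform (TL-1) (by linarith), hLform (TL-1-s) (by linarith)]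
      have : aL * (TL-1) + bL - (aL * (TL-1-s) + bL) = aL * s := by ring
      rw [this, abs_mul, abs_of_pos hs]
    have h2 := htri (TL-1) (TL-1-s)
    have h3 : |TL-1 - (TL-1-s)| = s := by
      rw [show TL-1 - (TL-1-s) = s by ring, abs_of_pos hs]
    have h4 : |f (TL-1-s)| ≤ |f (TL-1)| + lam * s := by
      have := abs_sub_abs_le_abs_sub (f (TL-1-s)) (f (TL-1))
      have h5 := hf (TL-1-s) (TL-1)
      have h6 : |TL-1-s - (TL-1)| = s := by
        rw [show TL-1-s-(TL-1) = -s by ring, abs_neg, abs_of_pos hs]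
      rw [h6] at h5
      linarith
    rw [h3] at h2
    rw [hA]
    have hmul := mul_le_mul_of_nonneg_left h4 hε'pos.le
    linarith only [h2, hmul]
  -- choose k
  obtain ⟨k, hk⟩ := exists_nat_gt (8 * lam / ε)
  have h2k : (0:ℝ) < 2 ^ k := by positivity
  have hk2 : 8 * lam / ε < 2 ^ k := lt_of_lt_of_le hk (by exact_mod_cast (Nat.lt_two_pow_self (n := k)).le)
  have hk3 : 8 * lam ≤ ε * 2 ^ k := by
    rw [div_lt_iff₀ hε] at hk2
    linarith only [hk2]
  set st : ℝ := 1 / 2 ^ k with hst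
  have hstpos : 0 < st := by positivity
  have hst2k : st * 2 ^ k = 1 := by
    rw [hst]; field_simp
  have hlamst : lam * st ≤ ε / 8 := by
    rw [hst]
    rw [mul_one_div, div_le_div_iff₀ h2k (by norm_num : (0:ℝ) < 8)]
    linarith only [hk3]
  -- choose δ
  set δ : ℝ := min (ε/8) (ε * lam / (2 * 2 ^ k)) with hδ
  have hδpos : 0 < δ := lt_min (by positivity) (by positivity)
  have hδ1 : δ ≤ ε/8 := min_le_left _ _
  have hδ2 : 2 * δ * 2 ^ k ≤ ε * lam := by
    have := min_le_right (ε/8) (ε * lam / (2 * 2 ^ k))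
    rw [← hδ] at this
    rw [le_div_iff₀ (by positivity)] at this
    linarith only [this]
  -- choose M₀
  obtain ⟨M₀, hM₀⟩ := exists_nat_ge (max (max T (-TL + 1)) (max (|bR| / |aR|) (|bL| / |aL|)))
  set M : ℝ := (M₀ : ℝ) with hM
  have hMT : T ≤ M := le_trans (le_trans (le_max_left _ _) (le_max_left _ _)) hM₀
  have hMTL : -TL + 1 ≤ M := le_trans (le_trans (le_max_right _ _) (le_max_left _ _)) hM₀
  have hMbR : |bR| / |aR| ≤ M := le_trans (le_trans (le_max_left _ _) (le_max_right _ _)) hM₀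
  have hMbL : |bL| / |aL| ≤ M := le_trans (le_trans (le_max_right _ _) (le_max_right _ _)) hM₀
  have hM1 : 1 ≤ M := by linarith
  have hmonoR : ∀ x, M ≤ x → |aR * M + bR| ≤ |aR * x + bR| := by
    intro x hx
    rcases lt_trichotomy aR 0 with hc | hc | hc
    · have ha : 0 < |aR| := abs_pos.mpr (ne_of_lt hc)
      have hb : |bR| ≤ M * |aR| := by
        rw [div_le_iff₀ ha] at hMbR; linarith
      rw [abs_of_neg hc] at hb
      have h1 : aR * M + bR ≤ 0 := by linarith only [le_abs_self bR, hb]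
      have hint : 0 ≤ (x - M) * (-aR) :=
        mul_nonneg (by linarith only [hx] : (0:ℝ) ≤ x - M) (by linarith only [hc] : (0:ℝ) ≤ -aR)
      have h2 : aR * x + bR ≤ 0 := by linarith only [hint, h1]
      rw [abs_of_nonpos h1, abs_of_nonpos h2]
      linarith only [hint]
    · simp [hc]
    · have ha : 0 < |aR| := abs_pos.mpr (ne_of_gt hc)
      have hb : |bR| ≤ M * |aR| := by
        rw [div_le_iff₀ ha] at hMbR; linarith
      rw [abs_of_pos hc] at hb
      have h1 : 0 ≤ aR * M + bR := by linarith only [neg_abs_le bR, hb]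
      have hint : 0 ≤ (x - M) * aR :=
        mul_nonneg (by linarith only [hx] : (0:ℝ) ≤ x - M) hc.le
      have h2 : 0 ≤ aR * x + bR := by linarith only [hint, h1]
      rw [abs_of_nonneg h1, abs_of_nonneg h2]
      linarith only [hint]
  have hmonoL : ∀ x, x ≤ -M → |aL * (-M) + bL| ≤ |aL * x + bL| := by
    intro x hx
    rcases lt_trichotomy aL 0 with hc | hc | hc
    · have ha : 0 < |aL| := abs_pos.mpr (ne_of_lt hc)
      have hb : |bL| ≤ M * |aL| := by
        rw [div_le_iff₀ ha] at hMbL; linarith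
      rw [abs_of_neg hc] at hb
      have h1 : 0 ≤ aL * (-M) + bL := by linarith only [neg_abs_le bL, hb]
      have hint : 0 ≤ (-M - x) * (-aL) :=
        mul_nonneg (by linarith only [hx] : (0:ℝ) ≤ -M - x) (by linarith only [hc] : (0:ℝ) ≤ -aL)
      have h2 : 0 ≤ aL * x + bL := by linarith only [hint, h1]
      rw [abs_of_nonneg h1, abs_of_nonneg h2]
      linarith only [hint]
    · simp [hc]
    · have ha : 0 < |aL| := abs_pos.mpr (ne_of_gt hc)
      have hb : |bL| ≤ M * |aL| := by
        rw [div_le_iff₀ ha] at hMbL; linarith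
      rw [abs_of_pos hc] at hb
      have h1 : aL * (-M) + bL ≤ 0 := by linarith only [le_abs_self bL, hb]
      have hint : 0 ≤ (-M - x) * aL :=
        mul_nonneg (by linarith only [hx] : (0:ℝ) ≤ -M - x) hc.le
      have h2 : aL * x + bL ≤ 0 := by linarith only [hint, h1]
      rw [abs_of_nonpos h1, abs_of_nonpos h2]
      linarith only [hint]
  -- the grid
  set NN : ℕ := M₀ * 2 ^ k with hNN
  have hNNr : (NN : ℝ) = M * 2 ^ k := by rw [hNN, hM]; push_cast; ring
  set nn : ℕ := 2 * NN + 1 with hnn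
  set P : ℕ → ℝ := fun j => -M + j * st with hP
  have hP1 : ∀ m : ℕ, P (m+1) = P m + st := by
    intro m; simp only [hP]; push_cast; ring
  have hPlt : ∀ i j : ℕ, i < j → P i < P j := by
    intro i j hij
    simp only [hP]
    have h1 : (i:ℝ) < j := by exact_mod_cast hij
    have h2 : (i:ℝ) * st < (j:ℝ) * st := mul_lt_mul_of_pos_right h1 hstpos
    linarith only [h2]
  have hPmono : ∀ i j : ℕ, i ≤ j → P i ≤ P j := by
    intro i j hij
    rcases eq_or_lt_of_le hij with h | h
    · subst h; exact le_rfl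
    · exact (hPlt i j h).le
  have hP0 : P 0 = -M := by simp [hP]
  have hPN : P (nn - 1) = M := by
    simp only [hP, hnn, hst, Nat.add_sub_cancel]
    push_cast
    rw [hNNr]
    field_simp
    ring
  have hPdy : ∀ j : ℕ, IsDyadic (P j) := by
    intro j
    refine ⟨-(M₀ : ℤ) * 2 ^ k + j, k, ?_⟩
    simp only [hP, hst, hM]
    push_cast
    field_simp
  -- dyadic values near f on grid
  have hVex : ∀ j : ℕ, ∃ d, IsDyadic d ∧ |d - f (P j)| ≤ δ := fun j =>
    exists_dyadic_near (f (P j)) δ hδpos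
  choose V hVdy hVapp using hVex
  set sl : ℕ → ℝ := fun m => (V (m+1) - V m) * 2 ^ k with hsl
  have hslh : ∀ m, sl m * st = V (m+1) - V m := by
    intro m
    simp only [hsl]
    rw [mul_assoc, mul_comm ((2:ℝ)^k) st, hst2k, mul_one]
  have hsldy : ∀ m, IsDyadic (sl m) :=
    fun m => isDyadic_mul (isDyadic_sub (hVdy _) (hVdy _)) (isDyadic_two_pow k)
  have hsl_bound : ∀ m : ℕ, |sl m| ≤ (1 + ε) * lam := by
    intro m
    have h1 := hVapp m
    have h2 := hVapp (m+1)
    have h3 : |f (P (m+1)) - f (P m)| ≤ lam * st := by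
      have habs : |P (m+1) - P m| = st := by
        rw [hP1 m]
        simp [abs_of_pos hstpos]
      calc |f (P (m+1)) - f (P m)| ≤ lam * |P (m+1) - P m| := hf _ _
        _ = lam * st := by rw [habs]
    have h4 : |V (m+1) - V m| ≤ lam * st + 2*δ := by
      have t1 := abs_sub_le (V (m+1)) (f (P (m+1))) (V m)
      have t2 := abs_sub_le (f (P (m+1))) (f (P m)) (V m)
      have t3 : |f (P m) - V m| = |V m - f (P m)| := abs_sub_comm _ _
      linarith only [t1, t2, t3, h1, h2, h3]
    have h5 : |sl m| = |V (m+1) - V m| * 2 ^ k := by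
      simp only [hsl]
      rw [abs_mul, abs_of_pos h2k]
    rw [h5]
    calc |V (m+1) - V m| * 2 ^ k ≤ (lam * st + 2*δ) * 2 ^ k :=
          mul_le_mul_of_nonneg_right h4 h2k.le
      _ = lam * (st * 2 ^ k) + 2 * δ * 2 ^ k := by ring
      _ ≤ lam + ε * lam := by rw [hst2k]; linarith [hδ2]
      _ = (1 + ε) * lam := by ring
  -- piecewise data
  set tt : Fin nn → ℝ := fun j => P j.val with htt
  set A : Fin (nn+1) → ℝ := fun i =>
    if i.val = 0 then aL else if i.val = nn then aR else sl (i.val - 1) with hA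
  set B : Fin (nn+1) → ℝ := fun i =>
    if i.val = 0 then V 0 - aL * P 0
    else if i.val = nn then V (nn-1) - aR * P (nn-1)
    else V (i.val - 1) - sl (i.val - 1) * P (i.val - 1) with hB
  have httmono : StrictMono tt := by
    intro i j hij
    exact hPlt i.val j.val hij
  have httdy : ∀ j, IsDyadic (tt j) := fun j => hPdy j.val
  have hABdy : ∀ i, IsDyadic (A i) ∧ IsDyadic (B i) := by
    intro i
    simp only [hA, hB]
    split_ifs with h1 h2
    · exact ⟨(hdab₁ 0).1, isDyadic_sub (hVdy 0) (isDyadic_mul (hdab₁ 0).1 (hPdy 0))⟩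
    · exact ⟨(hdab₁ _).1, isDyadic_sub (hVdy _) (isDyadic_mul (hdab₁ _).1 (hPdy _))⟩
    · exact ⟨hsldy _, isDyadic_sub (hVdy _) (isDyadic_mul (hsldy _) (hPdy _))⟩
  have hABK : ∀ i, |A i| ≤ (1 + ε) * lam := by
    intro i
    simp only [hA]
    split_ifs with h1 h2
    · calc |aL| ≤ (1 + ε/8) * lam := habsL
        _ ≤ (1 + ε) * lam := by linarith [mul_pos hε hlam]
    · calc |aR| ≤ (1 + ε/8) * lam := habsR
        _ ≤ (1 + ε) * lam := by linarith [mul_pos hε hlam]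
    · exact hsl_bound _
  have evalRight : ∀ i : Fin (nn+1), i.val ≠ nn → A i * P i.val + B i = V i.val := by
    intro i hi
    simp only [hA, hB]
    by_cases h0 : i.val = 0
    · rw [if_pos h0, if_pos h0, h0]; ring
    · rw [if_neg h0, if_neg h0, if_neg hi, if_neg hi]
      obtain ⟨m, hm⟩ : ∃ m, i.val = m + 1 := ⟨i.val - 1, by omega⟩
      rw [hm]
      simp only [Nat.add_sub_cancel]
      rw [hP1 m]
      linear_combination hslh m
  have evalLeft : ∀ i : Fin (nn+1), i.val ≠ 0 → A i * P (i.val - 1) + B i = V (i.val - 1) := by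
    intro i hi
    simp only [hA, hB]
    rw [if_neg hi, if_neg hi]
    by_cases h2 : i.val = nn
    · rw [if_pos h2, if_pos h2, h2]; ring
    · rw [if_neg h2, if_neg h2]; ring
  have hcont : ∀ j : Fin nn, A j.castSucc * tt j + B j.castSucc = A j.succ * tt j + B j.succ := by
    intro j
    have hj := j.isLt
    simp only [htt]
    have e1 := evalRight j.castSucc (by simp only [Fin.coe_castSucc]; omega)
    rw [Fin.coe_castSucc] at e1
    have e2 := evalLeft j.succ (by simp only [Fin.val_succ]; omega)
    rw [Fin.val_succ, Nat.add_sub_cancel] at e2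
    rw [e1, e2]
  obtain ⟨L, hLRPL, hLcont, hL3, hL4⟩ :=
    rpl_construct nn tt A B ((1 + ε) * lam) httmono httdy hABdy hcont hABK
  refine ⟨L, hLRPL, hLcont, ?_, hL4⟩
  -- error bound
  intro x
  rcases lt_or_ge x (-M) with hx | hx
  · -- left tail
    have hLx : L x = aL * x + (V 0 - aL * P 0) := by
      have := hL3 0 x (by intro j hj; simp at hj)
        (by
          intro j _
          calc x < -M := hx
            _ = P 0 := hP0.symm
            _ ≤ P j.val := hPmono 0 j.val (Nat.zero_le _)
          )
      rw [this]
      simp only [hA, hB]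
      norm_num
    have hxTL : x < TL := by linarith
    have hMTL2 : -M < TL := by linarith
    have e1 := h₁ x
    rw [hLform x hxTL] at e1
    have e2 := h₁ (-M)
    rw [hLform (-M) hMTL2] at e2
    have e3 := hmonoL x hx.le
    have e4 := hVapp 0
    rw [hP0] at e4
    have key : f x - L x = (f x - (aL*x+bL)) + ((aL*(-M)+bL) - V 0) := by
      rw [hLx, hP0]
      ring
    have t1 : |f x - L x| ≤ |f x - (aL*x+bL)| + |(aL*(-M)+bL) - f (-M)| + |f (-M) - V 0| := by
      rw [key]
      have u1 := abs_add_le (f x - (aL*x+bL)) ((aL*(-M)+bL) - V 0)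
      have u2 := abs_sub_le (aL*(-M)+bL) (f (-M)) (V 0)
      linarith only [u1, u2]
    have a1 : |f (-M)| - |aL*(-M)+bL| ≤ |f (-M) - (aL*(-M)+bL)| :=
      abs_sub_abs_le_abs_sub _ _
    have a2 : |aL*x+bL| - |f x| ≤ |f x - (aL*x+bL)| := by
      have := abs_sub_abs_le_abs_sub (aL*x+bL) (f x)
      rw [abs_sub_comm] at this
      linarith only [this]
    have a3 : |(aL*(-M)+bL) - f (-M)| = |f (-M) - (aL*(-M)+bL)| := abs_sub_comm _ _
    have a4 : |f (-M) - V 0| = |V 0 - f (-M)| := abs_sub_comm _ _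
    have hY : (1 - ε/8) * |f (-M)| ≤ (1 + ε/8) * |f x| + 2 * (ε/8) := by
      linarith only [a1, e2, e3, a2, e1]
    rw [a3, a4] at t1
    have hE2 : |f x - L x| ≤ (ε/8 * |f x| + ε/8) + (ε/8 * |f (-M)| + ε/8) + δ := by
      linarith only [t1, e1, e2, e4]
    exact tail_final hε hε1 hδ1 (abs_nonneg _) (abs_nonneg _) hE2 hY
  rcases le_or_gt M x with hx2 | hx2
  · -- right tail
    have hnn0 : nn ≠ 0 := by omega
    have hLx : L x = aR * x + (V (nn-1) - aR * P (nn-1)) := by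
      have := hL3 (Fin.last nn) x
        (by
          intro j _
          calc P j.val ≤ P (nn - 1) := hPmono j.val (nn-1) (by have := j.isLt; omega)
            _ = M := hPN
            _ ≤ x := hx2)
        (by
          intro j hj
          exact absurd (lt_of_lt_of_le j.isLt (by simpa [Fin.val_last] using hj)) (lt_irrefl _))
      rw [this]
      have hA' : A (Fin.last nn) = aR := by simp [hA, Fin.val_last, hnn0]
      have hB' : B (Fin.last nn) = V (nn-1) - aR * P (nn-1) := by simp [hB, Fin.val_last, hnn0]
      rw [hA', hB']
    have e1 := h₁ x
    rw [hRform x (by linarith)] at e1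
    have e2 := h₁ M
    rw [hRform M hMT] at e2
    have e3 := hmonoR x hx2
    have e4 := hVapp (nn-1)
    rw [hPN] at e4
    have key : f x - L x = (f x - (aR*x+bR)) + ((aR*M+bR) - V (nn-1)) := by
      rw [hLx, hPN]
      ring
    have t1 : |f x - L x| ≤ |f x - (aR*x+bR)| + |(aR*M+bR) - f M| + |f M - V (nn-1)| := by
      rw [key]
      have u1 := abs_add_le (f x - (aR*x+bR)) ((aR*M+bR) - V (nn-1))
      have u2 := abs_sub_le (aR*M+bR) (f M) (V (nn-1))
      linarith only [u1, u2]
    have a1 : |f M| - |aR*M+bR| ≤ |f M - (aR*M+bR)| := abs_sub_abs_le_abs_sub _ _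
    have a2 : |aR*x+bR| - |f x| ≤ |f x - (aR*x+bR)| := by
      have := abs_sub_abs_le_abs_sub (aR*x+bR) (f x)
      rw [abs_sub_comm] at this
      linarith only [this]
    have a3 : |(aR*M+bR) - f M| = |f M - (aR*M+bR)| := abs_sub_comm _ _
    have a4 : |f M - V (nn-1)| = |V (nn-1) - f M| := abs_sub_comm _ _
    have hY : (1 - ε/8) * |f M| ≤ (1 + ε/8) * |f x| + 2 * (ε/8) := by
      linarith only [a1, e2, e3, a2, e1]
    rw [a3, a4] at t1
    have hE2 : |f x - L x| ≤ (ε/8 * |f x| + ε/8) + (ε/8 * |f M| + ε/8) + δ := by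
      linarith only [t1, e1, e2, e4]
    exact tail_final hε hε1 hδ1 (abs_nonneg _) (abs_nonneg _) hE2 hY
  · -- middle
    set y : ℝ := (x + M) * 2 ^ k with hy
    have hy0 : 0 ≤ y := by
      rw [hy]
      have : 0 ≤ x + M := by linarith
      positivity
    have hyN : y < (2 * NN : ℕ) := by
      rw [hy]
      push_cast
      rw [hNNr]
      have hint : (x + M) * 2 ^ k < (2 * M) * 2 ^ k :=
        mul_lt_mul_of_pos_right (by linarith only [hx2]) h2k
      linarith only [hint]
    set j : ℕ := (⌊y⌋).toNat with hj
    have hjr : (j : ℝ) = ((⌊y⌋ : ℤ) : ℝ) := by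
      rw [hj]
      exact_mod_cast congrArg (Int.cast : ℤ → ℝ) (Int.toNat_of_nonneg (Int.floor_nonneg.mpr hy0))
    have hjy : (j : ℝ) ≤ y := by
      rw [hjr]
      exact Int.floor_le y
    have hjy2 : y < j + 1 := by
      rw [hjr]
      exact Int.lt_floor_add_one y
    have hjlt : j + 1 ≤ 2 * NN := by
      have h1 : (j:ℝ) < (2 * NN : ℕ) := lt_of_le_of_lt hjy hyN
      have h2 := (Nat.cast_lt (α := ℝ)).mp h1
      omega
    have hx1 : P j ≤ x := by
      simp only [hP]
      have : (j:ℝ) * st ≤ y * st := mul_le_mul_of_nonneg_right hjy hstpos.le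
      rw [hy] at this
      rw [mul_assoc, mul_comm ((2:ℝ)^k) st, hst2k, mul_one] at this
      linarith only [this]
    have hx2' : x < P (j+1) := by
      simp only [hP]
      have : y * st < ((j:ℝ)+1) * st := mul_lt_mul_of_pos_right hjy2 hstpos
      rw [hy] at this
      rw [mul_assoc, mul_comm ((2:ℝ)^k) st, hst2k, mul_one] at this
      push_cast
      linarith only [this]
    have hLx : L x = sl j * x + (V j - sl j * P j) := by
      have := hL3 ⟨j+1, by omega⟩ x
        (by
          intro j' hj'
          simp only [htt]
          calc P j'.val ≤ P j := hPmono j'.val j (by simpa using Nat.lt_succ_iff.mp hj')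
            _ ≤ x := hx1)
        (by
          intro j' hj'
          simp only [htt]
          calc x < P (j+1) := hx2'
            _ ≤ P j'.val := hPmono (j+1) j'.val (by simpa using hj'))
      rw [this]
      simp only [hA, hB]
      rw [if_neg (show ¬ (j + 1 = 0) by omega), if_neg (show ¬ (j + 1 = nn) by omega),
        if_neg (show ¬ (j + 1 = 0) by omega), if_neg (show ¬ (j + 1 = nn) by omega)]
      simp only [Nat.add_sub_cancel]
    have hVj := hVapp j
    have hfx : |f (P j) - f x| ≤ lam * st := by
      have := hf (P j) x
      have habs : |P j - x| ≤ st := by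
        rw [abs_le]
        constructor
        · have := hP1 j
          linarith only [this, hx2']
        · linarith only [hx1, hstpos]
      calc |f (P j) - f x| ≤ lam * |P j - x| := this
        _ ≤ lam * st := mul_le_mul_of_nonneg_left habs hlam.le
    have hslx : |sl j * (x - P j)| ≤ (1 + ε) * lam * st := by
      rw [abs_mul]
      have h1 : |x - P j| ≤ st := by
        rw [abs_le]
        constructor
        · linarith only [hx1, hstpos]
        · have := hP1 j
          linarith only [this, hx2']
      calc |sl j| * |x - P j| ≤ ((1+ε)*lam) * st := by
            apply mul_le_mul (hsl_bound j) h1 (abs_nonneg _)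
            positivity
        _ = (1 + ε) * lam * st := by ring
    have key : f x - L x = -((V j - f (P j)) + sl j * (x - P j) + (f (P j) - f x)) := by
      rw [hLx]
      ring
    have t1 : |f x - L x| ≤ δ + (1+ε)*lam*st + lam*st := by
      rw [key, abs_neg]
      have u1 := abs_add_le ((V j - f (P j)) + sl j * (x - P j)) (f (P j) - f x)
      have u2 := abs_add_le (V j - f (P j)) (sl j * (x - P j))
      linarith only [u1, u2, hVj, hslx, hfx]
    have hXpos : 0 ≤ ε * |f x| := mul_nonneg hε.le (abs_nonneg _)
    have hls2 : (1+ε)*lam*st ≤ 2 * (ε/8) := by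
      have hpos : 0 ≤ lam * st := by positivity
      have h2' : ε * (lam * st) ≤ 1 * (lam * st) := mul_le_mul_of_nonneg_right hε1 hpos
      linarith only [hlamst, h2', hpos]
    linarith only [t1, hls2, hlamst, hXpos, hδ1, hε.le]
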